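/- Let G be a graph of order n ≥ 2 and let Ĝ be the graph of order 5n obtained from G by attaching the central vertex of a disjoint copy of the path P_5 to each vertex of G (i.e., for each v ∈ V(G), add a new path a_v b_v c_v d_v e_v and the edge v c_v). Then γ_R(Ĝ) = 4n. -/

import Mathlib

/-- A Roman dominating function on `G`: labels in `{0,1,2}` and every vertex
labeled `0` has a neighbor labeled `2`. -/
def IsRDF {V : Type*} (G : SimpleGraph V) (f : V → ℕ) : Prop :=
  (∀ v, f v ≤ 2) ∧ ∀ v, f v = 0 → ∃ u, G.Adj v u ∧ f u = 2

/-- The Roman domination number of `G`. -/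
noncomputable def romanDom {V : Type*} [Fintype V] (G : SimpleGraph V) : ℕ :=
  sInf {w | ∃ f, IsRDF G f ∧ ∑ v, f v = w}

/-- The Roman domination number of the vertex-deleted graph `G - v`. -/
noncomputable def romanDomDel {V : Type*} [Fintype V] [DecidableEq V]
    (G : SimpleGraph V) (v : V) : ℕ :=
  romanDom (G.induce {w | w ≠ v})

/-- The Roman bondage number of `G`. -/
noncomputable def romanBondage {V : Type*} [Fintype V] [DecidableEq V]
    (G : SimpleGraph V) : ℕ :=
  sInf {k | ∃ B : Finset (Sym2 V), ↑B ⊆ G.edgeSet ∧ B.card = k ∧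
    romanDom (G.deleteEdges ↑B) ≠ romanDom G}

/-- The graph `Ĝ` obtained from `G` by attaching to each vertex `v` of `G`
the central vertex of a new copy of the path `P₅`. -/
def hatGraph {V : Type*} (G : SimpleGraph V) : SimpleGraph (V ⊕ V × Fin 5) :=
  SimpleGraph.fromRel (fun a b => match a, b with
    | Sum.inl u, Sum.inl w => G.Adj u w
    | Sum.inl u, Sum.inr (v, i) => u = v ∧ i = 2
    | Sum.inr (v, i), Sum.inr (w, j) => v = w ∧ (SimpleGraph.pathGraph 5).Adj i j
    | _, _ => False)

lemma key_nat (a b c d e : ℕ)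
    (h0 : a = 0 → b = 2) (h1 : b = 0 → a = 2 ∨ c = 2)
    (h3 : d = 0 → c = 2 ∨ e = 2) (h4 : e = 0 → d = 2) :
    4 ≤ a + b + c + d + e := by omega

/-- Characterization of neighbors of a path vertex in `hatGraph`. -/
lemma hat_adj_inr {V : Type*} (G : SimpleGraph V) (v : V) (i : Fin 5)
    (u : V ⊕ V × Fin 5) (h : (hatGraph G).Adj (Sum.inr (v, i)) u) :
    (∃ j : Fin 5, u = Sum.inr (v, j) ∧ (i.val + 1 = j.val ∨ j.val + 1 = i.val)) ∨
      (u = Sum.inl v ∧ i = 2) := by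
  rw [hatGraph, SimpleGraph.fromRel_adj] at h
  obtain ⟨-, h⟩ := h
  rcases u with w | ⟨w, j⟩
  · right
    rcases h with h | h
    · exact h.elim
    · exact ⟨by rw [h.1], h.2⟩
  · left
    rcases h with ⟨rfl, h⟩ | ⟨rfl, h⟩
    · exact ⟨j, rfl, SimpleGraph.pathGraph_adj.mp h⟩
    · exact ⟨j, rfl, (SimpleGraph.pathGraph_adj.mp h).symm⟩

lemma hat_adj_center {V : Type*} (G : SimpleGraph V) (v : V) (i : Fin 5)
    (hij : (SimpleGraph.pathGraph 5).Adj i 2) :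
    (hatGraph G).Adj (Sum.inr (v, i)) (Sum.inr (v, (2 : Fin 5))) := by
  rw [hatGraph, SimpleGraph.fromRel_adj]
  refine ⟨?_, Or.inl ⟨rfl, hij⟩⟩
  intro hc
  have : i = 2 := by simpa using hc
  exact hij.ne this

/-- For a graph `G` of order `n ≥ 2`, `γ_R(Ĝ) = 4n`. -/
theorem stmt16 {V : Type*} [Fintype V] (G : SimpleGraph V)
    (hn : 2 ≤ Fintype.card V) :
    romanDom (hatGraph G) = 4 * Fintype.card V := by
  classical
  set n := Fintype.card V with hn'
  -- witness function
  set f : V ⊕ V × Fin 5 → ℕ := fun x => match x with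
    | Sum.inl _ => 0
    | Sum.inr (_, i) => ![1, 0, 2, 0, 1] i with hf'
  have hadj2 : ∀ v : V, (hatGraph G).Adj (Sum.inl v) (Sum.inr (v, (2 : Fin 5))) := by
    intro v
    rw [hatGraph, SimpleGraph.fromRel_adj]
    exact ⟨by simp, Or.inl ⟨rfl, rfl⟩⟩
  have hf : IsRDF (hatGraph G) f := by
    constructor
    · rintro (v | ⟨v, i⟩)
      · simp [hf']
      · fin_cases i <;> simp [hf']
    · rintro (v | ⟨v, i⟩) h0
      · exact ⟨Sum.inr (v, 2), hadj2 v, rfl⟩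
      · fin_cases i
        · simp [hf'] at h0
        · exact ⟨Sum.inr (v, 2),
            hat_adj_center G v 1 (SimpleGraph.pathGraph_adj.mpr (by decide)), rfl⟩
        · simp [hf'] at h0
        · exact ⟨Sum.inr (v, 2),
            hat_adj_center G v 3 (SimpleGraph.pathGraph_adj.mpr (by decide)), rfl⟩
        · simp [hf'] at h0
  have hsum : ∑ x, f x = 4 * n := by
    rw [Fintype.sum_sum_type]
    simp only [hf']
    rw [Fintype.sum_prod_type]
    simp [Fin.sum_univ_five, mul_comm, hn']
  rw [romanDom]
  apply le_antisymm
  · exact Nat.sInf_le ⟨f, hf, hsum⟩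
  · refine le_csInf ⟨4 * n, f, hf, hsum⟩ ?_
    rintro w ⟨g, ⟨hg2, hg0⟩, rfl⟩
    have key : ∀ v : V, 4 ≤ ∑ i : Fin 5, g (Sum.inr (v, i)) := by
      intro v
      have h01 : g (Sum.inr (v, 0)) = 0 → g (Sum.inr (v, 1)) = 2 := by
        intro h
        obtain ⟨u, hu, hu2⟩ := hg0 _ h
        rcases hat_adj_inr G v 0 u hu with ⟨j, rfl, hj⟩ | ⟨-, hc⟩
        · have : j = 1 := by fin_cases j <;> revert hj <;> decide
          rwa [this] at hu2
        · exact absurd hc (by decide)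
      have h1 : g (Sum.inr (v, 1)) = 0 →
          g (Sum.inr (v, 0)) = 2 ∨ g (Sum.inr (v, 2)) = 2 := by
        intro h
        obtain ⟨u, hu, hu2⟩ := hg0 _ h
        rcases hat_adj_inr G v 1 u hu with ⟨j, rfl, hj⟩ | ⟨-, hc⟩
        · have : j = 0 ∨ j = 2 := by fin_cases j <;> revert hj <;> decide
          rcases this with rfl | rfl
          · exact Or.inl hu2
          · exact Or.inr hu2
        · exact absurd hc (by decide)
      have h3 : g (Sum.inr (v, 3)) = 0 →
          g (Sum.inr (v, 2)) = 2 ∨ g (Sum.inr (v, 4)) = 2 := by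
        intro h
        obtain ⟨u, hu, hu2⟩ := hg0 _ h
        rcases hat_adj_inr G v 3 u hu with ⟨j, rfl, hj⟩ | ⟨-, hc⟩
        · have : j = 2 ∨ j = 4 := by fin_cases j <;> revert hj <;> decide
          rcases this with rfl | rfl
          · exact Or.inl hu2
          · exact Or.inr hu2
        · exact absurd hc (by decide)
      have h4 : g (Sum.inr (v, 4)) = 0 → g (Sum.inr (v, 3)) = 2 := by
        intro h
        obtain ⟨u, hu, hu2⟩ := hg0 _ h
        rcases hat_adj_inr G v 4 u hu with ⟨j, rfl, hj⟩ | ⟨-, hc⟩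
        · have : j = 3 := by fin_cases j <;> revert hj <;> decide
          rwa [this] at hu2
        · exact absurd hc (by decide)
      rw [Fin.sum_univ_five]
      have := key_nat (g (Sum.inr (v, 0))) (g (Sum.inr (v, 1))) (g (Sum.inr (v, 2)))
        (g (Sum.inr (v, 3))) (g (Sum.inr (v, 4))) h01 h1 h3 h4
      omega
    calc 4 * n = ∑ _v : V, 4 := by simp [mul_comm, hn']
      _ ≤ ∑ v : V, ∑ i : Fin 5, g (Sum.inr (v, i)) := Finset.sum_le_sum fun v _ => key v
      _ = ∑ p : V × Fin 5, g (Sum.inr p) := by rw [Fintype.sum_prod_type]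
      _ ≤ ∑ x, g x := by
          rw [Fintype.sum_sum_type]
          exact Nat.le_add_left _ _
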